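/- If A is not a separable matrix (A ∉ 𝒮^{p,q} while A lies in the Kronecker span 𝒦^{p,q}), then there exists a bi-quadratic form B(x,y) that is nonnegative for all x ∈ ℝᵖ, y ∈ ℝ^q and whose associated matrix satisfies ⟨B, A⟩ < 0. Moreover, for small enough ε > 0, the form B₂(x,y) = B(x,y) + ε(xᵀx)(yᵀy) is strictly positive on the bi-sphere and still satisfies ⟨B₂, A⟩ < 0. -/

import Mathlib

open Matrix Kronecker

/-- A matrix is separable if it is a finite sum of Kronecker products of PSD matrices. -/
def SeparableMatrix (p q : ℕ) (A : Matrix (Fin p × Fin q) (Fin p × Fin q) ℝ) : Prop :=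
  ∃ (L : ℕ) (B : Fin L → Matrix (Fin p) (Fin p) ℝ)
    (C : Fin L → Matrix (Fin q) (Fin q) ℝ),
    (∀ j, (B j).PosSemidef) ∧ (∀ j, (C j).PosSemidef) ∧
      A = ∑ j : Fin L, (B j) ⊗ₖ (C j)

/-- The bi-quadratic form `B(x,y) = Σ b_{ijkl} x_i y_j x_k y_l`. -/
def biQuad {p q : ℕ} (b : Fin p → Fin q → Fin p → Fin q → ℝ)
    (x : Fin p → ℝ) (y : Fin q → ℝ) : ℝ :=
  ∑ i, ∑ j, ∑ k, ∑ l, b i j k l * x i * y j * x k * y l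

/-- The pairing `⟨B, A⟩` of a bi-quadratic form's coefficients with a matrix `A`,
so that `⟨B, (uuᵀ)⊗(vvᵀ)⟩ = B(u,v)`. -/
def biPairing {p q : ℕ} (b : Fin p → Fin q → Fin p → Fin q → ℝ)
    (A : Matrix (Fin p × Fin q) (Fin p × Fin q) ℝ) : ℝ :=
  ∑ i, ∑ j, ∑ k, ∑ l, b i j k l * A (i, j) (k, l)


set_option maxHeartbeats 1000000


section hull
open Module

lemma mySumExtend {F : Type*} [AddCommMonoid F] {m n : ℕ} (hmn : m ≤ n) (f : Fin m → F) :
    (∑ i : Fin n, if h : (i : ℕ) < m then f ⟨i, h⟩ else 0) = ∑ j : Fin m, f j := by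
  set g : ℕ → F := fun i => if h : i < m then f ⟨i, h⟩ else 0 with hg
  calc (∑ i : Fin n, g i) = ∑ i ∈ Finset.range n, g i := Fin.sum_univ_eq_sum_range g n
    _ = ∑ i ∈ Finset.range m, g i := (Finset.sum_subset (Finset.range_subset_range.2 hmn)
        (fun i _ hi => by simp only [hg]; rw [dif_neg (by simpa using hi)])).symm
    _ = ∑ i : Fin m, g i := (Fin.sum_univ_eq_sum_range g m).symm
    _ = ∑ j : Fin m, f j := Finset.sum_congr rfl fun i _ => by
        simp only [hg]; rw [dif_pos i.2]

theorem myIsCompactConvexHull {E : Type*} [NormedAddCommGroup E] [NormedSpace ℝ E]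
    [FiniteDimensional ℝ E] {s : Set E} (hs : IsCompact s) (hne : s.Nonempty) :
    IsCompact (convexHull ℝ s) := by
  classical
  obtain ⟨z₀, hz₀⟩ := hne
  set n := finrank ℝ E + 1 with hn
  set Φ : (Fin n → ℝ) × (Fin n → E) → E := fun wz => ∑ i, wz.1 i • wz.2 i with hΦ
  have hcont : Continuous Φ := by
    apply continuous_finset_sum
    intro i _
    exact ((continuous_apply i).comp continuous_fst).smul ((continuous_apply i).comp continuous_snd)
  have hK : IsCompact ((stdSimplex ℝ (Fin n)) ×ˢ (Set.pi Set.univ fun _ : Fin n => s)) :=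
    (isCompact_stdSimplex _ _).prod (isCompact_univ_pi fun _ => hs)
  have himage : convexHull ℝ s = Φ '' ((stdSimplex ℝ (Fin n)) ×ˢ (Set.pi Set.univ fun _ : Fin n => s)) := by
    apply Set.Subset.antisymm
    · intro x hx
      obtain ⟨ι, hfin, z, w, hzs, hai, hwpos, hwsum, hwx⟩ :=
        eq_pos_convex_span_of_mem_convexHull hx
      have hcard : Fintype.card ι ≤ n := by
        have h1 := hai.card_le_finrank_succ
        have h2 : finrank ℝ ↥(vectorSpan ℝ (Set.range z)) ≤ finrank ℝ E :=
          Submodule.finrank_le _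
        omega
      set m := Fintype.card ι with hm
      let e : ι ≃ Fin m := Fintype.equivFin ι
      set w' : Fin n → ℝ := fun i => if h : (i : ℕ) < m then w (e.symm ⟨i, h⟩) else 0 with hw'
      set z' : Fin n → E := fun i => if h : (i : ℕ) < m then z (e.symm ⟨i, h⟩) else z₀ with hz'
      have key : ∀ i : Fin n, w' i • z' i =
          (if h : (i : ℕ) < m then (fun j : Fin m => w (e.symm j) • z (e.symm j)) ⟨i, h⟩ else 0) := by
        intro i
        by_cases h : (i : ℕ) < m
        · simp only [hw', hz', dif_pos h]
        · simp only [hw', hz', dif_neg h, zero_smul]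
      refine ⟨(w', z'), ⟨⟨?_, ?_⟩, ?_⟩, ?_⟩
      · intro i
        by_cases h : (i : ℕ) < m
        · simp only [hw', dif_pos h]; exact (hwpos _).le
        · simp only [hw', dif_neg h]; exact le_refl 0
      · have : ∀ i : Fin n, w' i = (if h : (i : ℕ) < m then (fun j : Fin m => w (e.symm j)) ⟨i, h⟩ else 0) := by
          intro i; by_cases h : (i : ℕ) < m
          · simp only [hw', dif_pos h]
          · simp only [hw', dif_neg h]
        calc ∑ i, w' i = ∑ i : Fin n, (if h : (i : ℕ) < m then (fun j : Fin m => w (e.symm j)) ⟨i, h⟩ else 0) :=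
              Finset.sum_congr rfl fun i _ => this i
          _ = ∑ j : Fin m, w (e.symm j) := mySumExtend hcard (fun j : Fin m => w (e.symm j))
          _ = ∑ j : ι, w j := e.symm.sum_comp w
          _ = 1 := hwsum
      · intro i _
        by_cases h : (i : ℕ) < m
        · simp only [hz', dif_pos h]; exact hzs (Set.mem_range_self _)
        · simp only [hz', dif_neg h]; exact hz₀
      · calc Φ (w', z') = ∑ i : Fin n, w' i • z' i := rfl
          _ = ∑ i : Fin n, (if h : (i : ℕ) < m then (fun j : Fin m => w (e.symm j) • z (e.symm j)) ⟨i, h⟩ else 0) :=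
              Finset.sum_congr rfl fun i _ => key i
          _ = ∑ j : Fin m, w (e.symm j) • z (e.symm j) := mySumExtend hcard (fun j : Fin m => w (e.symm j) • z (e.symm j))
          _ = ∑ j : ι, w j • z j := e.symm.sum_comp fun j => w j • z j
          _ = x := hwx
    · rintro x ⟨⟨w, z⟩, ⟨⟨hw0, hw1⟩, hzs⟩, rfl⟩
      exact Convex.sum_mem (convex_convexHull ℝ s) (fun i _ => hw0 i) hw1
        (fun i _ => subset_convexHull ℝ s (hzs i (Set.mem_univ i)))
  rw [himage]
  exact hK.image hcont

end hull

/- === matrix space setup === -/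
attribute [local instance] Matrix.normedAddCommGroup Matrix.normedSpace

namespace SepAux

variable (p q : ℕ)

abbrev Mpq := Matrix (Fin p × Fin q) (Fin p × Fin q) ℝ

/-- unit vectors for the dot product -/
def unitSet (n : ℕ) : Set (Fin n → ℝ) := {u | u ⬝ᵥ u = 1}

lemma isCompact_unitSet (n : ℕ) : IsCompact (unitSet n) := by
  have hcl : IsClosed (unitSet n) := by
    have : Continuous fun u : Fin n → ℝ => u ⬝ᵥ u := by
      unfold dotProduct
      exact continuous_finset_sum _ fun i _ => (continuous_apply i).mul (continuous_apply i)
    exact isClosed_singleton.preimage this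
  refine IsCompact.of_isClosed_subset (isCompact_closedBall (0 : Fin n → ℝ) 1) hcl ?_
  intro u hu
  simp only [Metric.mem_closedBall, dist_zero_right]
  rw [pi_norm_le_iff_of_nonneg zero_le_one]
  intro i
  have h1 : u i * u i ≤ 1 := by
    have := Finset.single_le_sum (f := fun j => u j * u j)
      (fun j _ => mul_self_nonneg (u j)) (Finset.mem_univ i)
    calc u i * u i ≤ ∑ j, u j * u j := this
      _ = 1 := hu
  have := abs_le_one_iff_mul_self_le_one.2 h1
  simpa [Real.norm_eq_abs] using this

/-- the set of normalized pure tensors -/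
def G1 : Set (Mpq p q) :=
  {M | ∃ u v, u ⬝ᵥ u = 1 ∧ v ⬝ᵥ v = 1 ∧ M = vecMulVec u u ⊗ₖ vecMulVec v v}

lemma isCompact_G1 : IsCompact (G1 p q) := by
  have himg : G1 p q = (fun w : (Fin p → ℝ) × (Fin q → ℝ) =>
      vecMulVec w.1 w.1 ⊗ₖ vecMulVec w.2 w.2) '' ((unitSet p) ×ˢ (unitSet q)) := by
    ext M
    constructor
    · rintro ⟨u, v, hu, hv, rfl⟩; exact ⟨(u, v), ⟨hu, hv⟩, rfl⟩
    · rintro ⟨⟨u, v⟩, ⟨hu, hv⟩, rfl⟩; exact ⟨u, v, hu, hv, rfl⟩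
  rw [himg]
  refine ((isCompact_unitSet p).prod (isCompact_unitSet q)).image ?_
  apply continuous_matrix
  rintro ⟨i, j⟩ ⟨k, l⟩
  simp only [kroneckerMap_apply, vecMulVec_apply]
  fun_prop

end SepAux

namespace SepAux2
open SepAux

variable (p q : ℕ)

noncomputable def Tr : Mpq p q →L[ℝ] ℝ :=
  LinearMap.toContinuousLinearMap (Matrix.traceLinearMap (Fin p × Fin q) ℝ ℝ)

lemma Tr_apply (M : Mpq p q) : Tr p q M = M.trace := rfl

lemma Tr_G1 {M : Mpq p q} (hM : M ∈ G1 p q) : Tr p q M = 1 := by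
  obtain ⟨u, v, hu, hv, rfl⟩ := hM
  rw [Tr_apply, Matrix.trace_kronecker]
  have h1 : (vecMulVec u u).trace = u ⬝ᵥ u := by
    simp [Matrix.trace, Matrix.diag, vecMulVec_apply, dotProduct]
  have h2 : (vecMulVec v v).trace = v ⬝ᵥ v := by
    simp [Matrix.trace, Matrix.diag, vecMulVec_apply, dotProduct]
  rw [h1, h2, hu, hv, mul_one]

noncomputable def H : Set (Mpq p q) := convexHull ℝ (G1 p q)

lemma Tr_H {M : Mpq p q} (hM : M ∈ H p q) : Tr p q M = 1 := by
  have hconv : Convex ℝ {M : Mpq p q | Tr p q M = 1} :=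
    convex_hyperplane (IsLinearMap.mk (map_add _) (map_smul _)) 1
  exact convexHull_min (fun N hN => Tr_G1 p q hN) hconv hM

variable {p q}

lemma G1_nonempty (hp : 0 < p) (hq : 0 < q) : (G1 p q).Nonempty := by
  have exu : ∀ n : ℕ, 0 < n → ∃ u : Fin n → ℝ, u ⬝ᵥ u = 1 := by
    intro n hn
    refine ⟨Pi.single ⟨0, hn⟩ 1, ?_⟩
    simp [dotProduct, Pi.single_apply]
  obtain ⟨u, hu⟩ := exu p hp
  obtain ⟨v, hv⟩ := exu q hq
  exact ⟨_, u, v, hu, hv, rfl⟩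

lemma isCompact_H (hp : 0 < p) (hq : 0 < q) : IsCompact (H p q) :=
  myIsCompactConvexHull (isCompact_G1 p q) (G1_nonempty hp hq)

/-- The cone over H. -/
def C : Set (Mpq p q) :=
  {M | ∃ t : ℝ, 0 ≤ t ∧ ∃ c ∈ H p q, M = t • c}

lemma zero_mem_C (hp : 0 < p) (hq : 0 < q) : (0 : Mpq p q) ∈ C := by
  obtain ⟨g, hg⟩ := G1_nonempty hp hq
  exact ⟨0, le_refl 0, g, subset_convexHull ℝ _ hg, (zero_smul ℝ g).symm⟩

lemma C_add : ∀ x ∈ C (p := p) (q := q), ∀ y ∈ C, x + y ∈ C := by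
  rintro x ⟨t₁, ht₁, c₁, hc₁, rfl⟩ y ⟨t₂, ht₂, c₂, hc₂, rfl⟩
  rcases eq_or_lt_of_le (add_nonneg ht₁ ht₂) with hT | hT
  · have h1 : t₁ = 0 := by linarith
    have h2 : t₂ = 0 := by linarith
    refine ⟨0, le_refl 0, c₁, hc₁, ?_⟩
    simp [h1, h2]
  · set T := t₁ + t₂ with hTdef
    refine ⟨T, hT.le, (t₁ / T) • c₁ + (t₂ / T) • c₂, ?_, ?_⟩
    · exact (convex_convexHull ℝ (G1 p q)) hc₁ hc₂ (div_nonneg ht₁ hT.le)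
        (div_nonneg ht₂ hT.le) (by field_simp; exact hTdef.symm)
    · rw [smul_add, smul_smul, smul_smul, mul_div_cancel₀ _ (ne_of_gt hT),
        mul_div_cancel₀ _ (ne_of_gt hT)]

lemma C_smul : ∀ s : ℝ, 0 ≤ s → ∀ x ∈ C (p := p) (q := q), s • x ∈ C := by
  rintro s hs x ⟨t, ht, c, hc, rfl⟩
  exact ⟨s * t, mul_nonneg hs ht, c, hc, smul_smul s t c⟩

lemma C_convex : Convex ℝ (C (p := p) (q := q)) := by
  intro x hx y hy a b ha hb hab
  exact C_add _ (C_smul a ha x hx) _ (C_smul b hb y hy)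

lemma C_closed (hp : 0 < p) (hq : 0 < q) : IsClosed (C (p := p) (q := q)) := by
  have hHcomp := isCompact_H hp hq
  obtain ⟨R, hR⟩ := isBounded_iff_forall_norm_le.1 hHcomp.isBounded
  haveI : SequentialSpace (Mpq p q) :=
    inferInstanceAs (SequentialSpace (Fin p × Fin q → Fin p × Fin q → ℝ))
  apply IsSeqClosed.isClosed
  intro f z hf hz
  set tn : ℕ → ℝ := fun n => Tr p q (f n) with htn
  have htval : ∀ n, ∀ t : ℝ, ∀ c ∈ H p q, f n = t • c → tn n = t := by
    intro n t c hc hfc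
    show Tr p q (f n) = t
    rw [hfc, _root_.map_smul, smul_eq_mul, Tr_H p q hc, mul_one]
  have htn_nonneg : ∀ n, 0 ≤ tn n := by
    intro n
    obtain ⟨t, ht, c, hc, hfc⟩ := hf n
    rw [htval n t c hc hfc]; exact ht
  have htlim : Filter.Tendsto tn Filter.atTop (nhds (Tr p q z)) :=
    ((Tr p q).continuous.tendsto z).comp hz
  have hTz : 0 ≤ Tr p q z := ge_of_tendsto' htlim htn_nonneg
  rcases eq_or_lt_of_le hTz with h0 | hpos
  · -- limit has trace 0, so z = 0
    have hz0 : z = 0 := by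
      have hnorm : ∀ n, ‖f n‖ ≤ tn n * R := by
        intro n
        obtain ⟨t, ht, c, hc, hfc⟩ := hf n
        rw [htval n t c hc hfc, hfc, norm_smul, Real.norm_eq_abs, abs_of_nonneg ht]
        exact mul_le_mul_of_nonneg_left (hR c hc) ht
      have hlim2 : Filter.Tendsto (fun n => tn n * R) Filter.atTop (nhds (Tr p q z * R)) :=
        htlim.mul_const R
      rw [← h0, zero_mul] at hlim2
      have hnlim : Filter.Tendsto (fun n => ‖f n‖) Filter.atTop (nhds ‖z‖) :=
        (continuous_norm.tendsto z).comp hz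
      have : ‖z‖ ≤ 0 :=
        le_of_tendsto_of_tendsto' hnlim hlim2 hnorm
      simpa using le_antisymm this (norm_nonneg z)
    rw [hz0]
    exact zero_mem_C hp hq
  · -- positive trace
    have hev : ∀ᶠ n in Filter.atTop, 0 < tn n :=
      htlim.eventually (eventually_gt_nhds hpos)
    have hmem : ∀ᶠ n in Filter.atTop, (tn n)⁻¹ • f n ∈ H p q := by
      filter_upwards [hev] with n hn
      obtain ⟨t, ht, c, hc, hfc⟩ := hf n
      have hteq := htval n t c hc hfc
      rw [hfc, ← hteq, inv_smul_smul₀ (ne_of_gt (hteq ▸ hn))]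
      exact hc
    have hclim : Filter.Tendsto (fun n => (tn n)⁻¹ • f n) Filter.atTop
        (nhds ((Tr p q z)⁻¹ • z)) :=
      (htlim.inv₀ (ne_of_gt hpos)).smul hz
    have hlimH : (Tr p q z)⁻¹ • z ∈ H p q :=
      (hHcomp.isClosed).mem_of_tendsto hclim hmem
    exact ⟨Tr p q z, hTz, _, hlimH, (smul_inv_smul₀ (ne_of_gt hpos) z).symm⟩

end SepAux2

namespace SepAux2
open SepAux

lemma posSemidef_smulMat {n : ℕ} {t : ℝ} (ht : 0 ≤ t) {M : Matrix (Fin n) (Fin n) ℝ}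
    (hM : M.PosSemidef) : (t • M).PosSemidef := by
  exact hM.smul ht

lemma posSemidef_vecMulVec {n : ℕ} (u : Fin n → ℝ) : (Matrix.vecMulVec u u).PosSemidef := by
  simpa using Matrix.posSemidef_vecMulVec_self_star u

variable {p q : ℕ}

lemma sep_zero : SeparableMatrix p q 0 :=
  ⟨0, fun j => 0, fun j => 0, fun j => j.elim0, fun j => j.elim0, by simp⟩

lemma sep_add {A₁ A₂ : Mpq p q} (h₁ : SeparableMatrix p q A₁) (h₂ : SeparableMatrix p q A₂) :
    SeparableMatrix p q (A₁ + A₂) := by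
  obtain ⟨L₁, B₁, C₁, hB₁, hC₁, rfl⟩ := h₁
  obtain ⟨L₂, B₂, C₂, hB₂, hC₂, rfl⟩ := h₂
  refine ⟨L₁ + L₂, Fin.append B₁ B₂, Fin.append C₁ C₂, ?_, ?_, ?_⟩
  · intro j
    refine Fin.addCases (fun i => ?_) (fun i => ?_) j
    · rw [Fin.append_left]; exact hB₁ i
    · rw [Fin.append_right]; exact hB₂ i
  · intro j
    refine Fin.addCases (fun i => ?_) (fun i => ?_) j
    · rw [Fin.append_left]; exact hC₁ i
    · rw [Fin.append_right]; exact hC₂ i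
  · rw [Fin.sum_univ_add]
    congr 1
    · exact Finset.sum_congr rfl fun i _ => by rw [Fin.append_left, Fin.append_left]
    · exact Finset.sum_congr rfl fun i _ => by rw [Fin.append_right, Fin.append_right]

lemma sep_smul {A : Mpq p q} {t : ℝ} (ht : 0 ≤ t) (h : SeparableMatrix p q A) :
    SeparableMatrix p q (t • A) := by
  obtain ⟨L, B, C, hB, hC, rfl⟩ := h
  refine ⟨L, fun j => t • B j, C, fun j => posSemidef_smulMat ht (hB j), hC, ?_⟩
  rw [Finset.smul_sum]
  exact Finset.sum_congr rfl fun j _ => (smul_kronecker t (B j) (C j)).symm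

lemma sep_convex : Convex ℝ {A : Mpq p q | SeparableMatrix p q A} := by
  intro x hx y hy a b ha hb hab
  exact sep_add (sep_smul ha hx) (sep_smul hb hy)

lemma G1_subset_sep : G1 p q ⊆ {A : Mpq p q | SeparableMatrix p q A} := by
  rintro M ⟨u, v, hu, hv, rfl⟩
  exact ⟨1, fun _ => vecMulVec u u, fun _ => vecMulVec v v,
    fun _ => posSemidef_vecMulVec u, fun _ => posSemidef_vecMulVec v, by simp⟩

lemma C_subset_sep : C (p := p) (q := q) ⊆ {A : Mpq p q | SeparableMatrix p q A} := by
  rintro M ⟨t, ht, c, hc, rfl⟩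
  have hHsep : c ∈ {A : Mpq p q | SeparableMatrix p q A} :=
    convexHull_min G1_subset_sep sep_convex hc
  exact sep_smul ht hHsep

/-- all pure tensors, not just normalized, are in the cone. -/
lemma pure_mem_C (hp : 0 < p) (hq : 0 < q) (x : Fin p → ℝ) (y : Fin q → ℝ) :
    vecMulVec x x ⊗ₖ vecMulVec y y ∈ C (p := p) (q := q) := by
  have key : ∀ n : ℕ, ∀ w : Fin n → ℝ, w ⬝ᵥ w = 0 → w = 0 := by
    intro n w hw
    funext i
    have h1 : w i * w i ≤ 0 := by
      have := Finset.single_le_sum (f := fun j => w j * w j)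
        (fun j _ => mul_self_nonneg (w j)) (Finset.mem_univ i)
      calc w i * w i ≤ ∑ j, w j * w j := this
        _ = 0 := hw
    have := le_antisymm h1 (mul_self_nonneg (w i))
    exact mul_self_eq_zero.1 this
  have hxx : 0 ≤ x ⬝ᵥ x := Finset.sum_nonneg fun i _ => mul_self_nonneg (x i)
  have hyy : 0 ≤ y ⬝ᵥ y := Finset.sum_nonneg fun i _ => mul_self_nonneg (y i)
  rcases eq_or_lt_of_le hxx with hx0 | hx0
  · have : x = 0 := key p x hx0.symm
    rw [this]
    have : vecMulVec (0 : Fin p → ℝ) (0 : Fin p → ℝ) = (0 : Matrix (Fin p) (Fin p) ℝ) := by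
      ext i j; simp [vecMulVec_apply]
    rw [this, Matrix.zero_kronecker]
    exact zero_mem_C hp hq
  rcases eq_or_lt_of_le hyy with hy0 | hy0
  · have : y = 0 := key q y hy0.symm
    rw [this]
    have : vecMulVec (0 : Fin q → ℝ) (0 : Fin q → ℝ) = (0 : Matrix (Fin q) (Fin q) ℝ) := by
      ext i j; simp [vecMulVec_apply]
    rw [this, Matrix.kronecker_zero]
    exact zero_mem_C hp hq
  -- both positive
  set a := x ⬝ᵥ x with ha
  set c := y ⬝ᵥ y with hcdef
  set u : Fin p → ℝ := (Real.sqrt a)⁻¹ • x with hu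
  set v : Fin q → ℝ := (Real.sqrt c)⁻¹ • y with hv
  have hsa : Real.sqrt a > 0 := Real.sqrt_pos.2 hx0
  have hsc : Real.sqrt c > 0 := Real.sqrt_pos.2 hy0
  have hdotu : u ⬝ᵥ u = 1 := by
    rw [hu, smul_dotProduct, dotProduct_smul, smul_eq_mul, smul_eq_mul,
      ← mul_assoc, ← mul_inv]
    rw [Real.mul_self_sqrt hxx, ← ha]
    exact inv_mul_cancel₀ (ne_of_gt hx0)
  have hdotv : v ⬝ᵥ v = 1 := by
    rw [hv, smul_dotProduct, dotProduct_smul, smul_eq_mul, smul_eq_mul,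
      ← mul_assoc, ← mul_inv]
    rw [Real.mul_self_sqrt hyy, ← hcdef]
    exact inv_mul_cancel₀ (ne_of_gt hy0)
  have hxu : x = Real.sqrt a • u := (smul_inv_smul₀ (ne_of_gt hsa) x).symm
  have hyv : y = Real.sqrt c • v := (smul_inv_smul₀ (ne_of_gt hsc) y).symm
  have hvmv : ∀ n : ℕ, ∀ (s : ℝ) (w : Fin n → ℝ),
      vecMulVec (s • w) (s • w) = (s * s) • vecMulVec w w := by
    intro n s w
    ext i j
    simp [vecMulVec_apply, Pi.smul_apply, smul_eq_mul]
    ring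
  refine ⟨a * c, mul_nonneg hxx hyy, vecMulVec u u ⊗ₖ vecMulVec v v,
    subset_convexHull ℝ _ ⟨u, v, hdotu, hdotv, rfl⟩, ?_⟩
  rw [hxu, hyv, hvmv p _ u, hvmv q _ v, smul_kronecker, kronecker_smul, smul_smul]
  rw [Real.mul_self_sqrt hxx, Real.mul_self_sqrt hyy]

end SepAux2

namespace SepAux2
open SepAux

variable {p q : ℕ}

lemma exists_sep_functional (hp : 0 < p) (hq : 0 < q) {A : Mpq p q}
    (hA : A ∉ C (p := p) (q := q)) :
    ∃ f : Mpq p q →L[ℝ] ℝ, f A < 0 ∧ ∀ M ∈ C (p := p) (q := q), 0 ≤ f M := by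
  haveI : LocallyConvexSpace ℝ (Mpq p q) :=
    inferInstanceAs (LocallyConvexSpace ℝ (Fin p × Fin q → Fin p × Fin q → ℝ))
  obtain ⟨f, u, hfA, hfC⟩ :=
    geometric_hahn_banach_point_closed (C_convex) (C_closed hp hq) hA
  have hu0 : u < 0 := by
    have := hfC 0 (zero_mem_C hp hq)
    simpa using this
  refine ⟨f, lt_trans hfA hu0, ?_⟩
  intro M hM
  by_contra hneg
  push_neg at hneg
  set t : ℝ := (u - 1) / (f M) with htdef
  have ht : 0 ≤ t := by
    exact div_nonneg_of_nonpos (by linarith) (by linarith)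
  have := hfC (t • M) (C_smul t ht M hM)
  rw [_root_.map_smul, smul_eq_mul, htdef, div_mul_cancel₀ _ (ne_of_lt hneg)] at this
  linarith

lemma biPairing_eq_f (f : Mpq p q →L[ℝ] ℝ) (M : Mpq p q) :
    biPairing (fun i j k l => f (Matrix.single (i, j) (k, l) 1)) M = f M := by
  classical
  have h1 : f M = ∑ r : Fin p × Fin q, ∑ s : Fin p × Fin q,
      M r s * f (Matrix.single r s 1) := by
    conv_lhs => rw [matrix_eq_sum_single M]
    rw [map_sum]
    refine Finset.sum_congr rfl fun r _ => ?_
    rw [map_sum]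
    refine Finset.sum_congr rfl fun s _ => ?_
    have : Matrix.single r s (M r s) = (M r s) • Matrix.single r s (1 : ℝ) := by
      rw [smul_single, smul_eq_mul, mul_one]
    rw [this, _root_.map_smul, smul_eq_mul]
  rw [h1, biPairing]
  rw [Fintype.sum_prod_type]
  refine Finset.sum_congr rfl fun i _ => ?_
  refine Finset.sum_congr rfl fun j _ => ?_
  rw [Fintype.sum_prod_type]
  refine Finset.sum_congr rfl fun k _ => ?_
  refine Finset.sum_congr rfl fun l _ => ?_
  rw [mul_comm]

lemma biQuad_eq_pairing (b : Fin p → Fin q → Fin p → Fin q → ℝ)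
    (x : Fin p → ℝ) (y : Fin q → ℝ) :
    biQuad b x y = biPairing b (vecMulVec x x ⊗ₖ vecMulVec y y) := by
  unfold biQuad biPairing
  refine Finset.sum_congr rfl fun i _ => ?_
  refine Finset.sum_congr rfl fun j _ => ?_
  refine Finset.sum_congr rfl fun k _ => ?_
  refine Finset.sum_congr rfl fun l _ => ?_
  simp only [kroneckerMap_apply, vecMulVec_apply]
  ring

end SepAux2


open SepAux SepAux2

/-- If `A` lies in the Kronecker span but is not separable, there is a nonnegative
bi-quadratic form `B` with `⟨B, A⟩ < 0`; moreover for all small enough `ε > 0`, the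
form `B₂ = B + ε(xᵀx)(yᵀy)` is strictly positive on the bi-sphere and still satisfies
`⟨B₂, A⟩ = ⟨B, A⟩ + ε·trace(A) < 0`. -/
theorem not_separable_strict_separation (p q : ℕ)
    (A : Matrix (Fin p × Fin q) (Fin p × Fin q) ℝ)
    (hA : A ∈ Submodule.span ℝ
      {M : Matrix (Fin p × Fin q) (Fin p × Fin q) ℝ |
        ∃ (B : Matrix (Fin p) (Fin p) ℝ) (C : Matrix (Fin q) (Fin q) ℝ),
          B.IsSymm ∧ C.IsSymm ∧ M = B ⊗ₖ C})
    (hsep : ¬ SeparableMatrix p q A) :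
    ∃ b : Fin p → Fin q → Fin p → Fin q → ℝ,
      (∀ (x : Fin p → ℝ) (y : Fin q → ℝ), 0 ≤ biQuad b x y) ∧
      biPairing b A < 0 ∧
      ∃ ε₀ : ℝ, 0 < ε₀ ∧ ∀ ε : ℝ, 0 < ε → ε ≤ ε₀ →
        (∀ (x : Fin p → ℝ) (y : Fin q → ℝ), x ⬝ᵥ x = 1 → y ⬝ᵥ y = 1 →
          0 < biQuad b x y + ε * (x ⬝ᵥ x) * (y ⬝ᵥ y)) ∧
        biPairing b A + ε * A.trace < 0 := by
  rcases Nat.eq_zero_or_pos p with hp0 | hp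
  · exfalso
    apply hsep
    subst hp0
    have hA0 : A = 0 := by ext r s; exact r.1.elim0
    rw [hA0]; exact sep_zero
  rcases Nat.eq_zero_or_pos q with hq0 | hq
  · exfalso
    apply hsep
    subst hq0
    have hA0 : A = 0 := by ext r s; exact r.2.elim0
    rw [hA0]; exact sep_zero
  have hAC : A ∉ C (p := p) (q := q) := fun h => hsep (C_subset_sep h)
  obtain ⟨f, hfA, hfC⟩ := exists_sep_functional hp hq hAC
  set b : Fin p → Fin q → Fin p → Fin q → ℝ :=
    fun i j k l => f (Matrix.single (i, j) (k, l) 1) with hb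
  have hpair : ∀ M, biPairing b M = f M := fun M => biPairing_eq_f f M
  have hquad : ∀ (x : Fin p → ℝ) (y : Fin q → ℝ), 0 ≤ biQuad b x y := by
    intro x y
    rw [biQuad_eq_pairing, hpair]
    exact hfC _ (pure_mem_C hp hq x y)
  have hApair : biPairing b A < 0 := by rw [hpair]; exact hfA
  refine ⟨b, hquad, hApair, ?_⟩
  by_cases htr : A.trace ≤ 0
  · refine ⟨1, one_pos, fun ε hε hε1 => ⟨?_, ?_⟩⟩
    · intro x y hx hy
      rw [hx, hy]
      have := hquad x y
      nlinarith
    · have : ε * A.trace ≤ 0 := mul_nonpos_of_nonneg_of_nonpos hε.le htr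
      linarith
  · push_neg at htr
    refine ⟨(-biPairing b A) / (2 * A.trace), div_pos (by linarith) (by linarith), fun ε hε hε1 => ⟨?_, ?_⟩⟩
    · intro x y hx hy
      rw [hx, hy]
      have := hquad x y
      nlinarith
    · have h2 : ε * A.trace ≤ ((-biPairing b A) / (2 * A.trace)) * A.trace :=
        mul_le_mul_of_nonneg_right hε1 htr.le
      have h3 : ((-biPairing b A) / (2 * A.trace)) * A.trace = -biPairing b A / 2 := by
        field_simp
      rw [h3] at h2
      linarith
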